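/- Let k ∈ ℕ and δ < 1/2. For all sufficiently large d ∈ ℕ, the Hamming ball H_k(𝟙) ⊆ 𝔽₂^d is δ-nonrecurrent, where 𝟙 = (1,…,1). -/

import Mathlib

/-- `S ⊆ Γ` is `δ`-nonrecurrent in the finite abelian group `Γ`: there is `A ⊆ Γ`
with `|A| > δ|Γ|` and `(A - A) ∩ S = ∅`. -/
def GroupNonrecurrent {Γ : Type*} [AddCommGroup Γ] [Fintype Γ] (δ : ℝ) (S : Set Γ) : Prop :=
  ∃ A : Set Γ, δ * (Fintype.card Γ : ℝ) < (A.ncard : ℝ) ∧ ∀ a ∈ A, ∀ b ∈ A, a - b ∉ S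

/-- The Hamming ball of radius `k` around `y` in `𝔽₂^d`:
all `x` differing from `y` in at most `k` coordinates. -/
def hammingBall (d k : ℕ) (y : Fin d → ZMod 2) : Set (Fin d → ZMod 2) :=
  {x | hammingDist y x ≤ k}

section AuxHB
open Finset

lemma central_sq (n : ℕ) : (2*n+1) * (Nat.centralBinom n)^2 ≤ 16^n := by
  induction n with
  | zero => simp [Nat.centralBinom]
  | succ n ih =>
    have h := Nat.succ_mul_centralBinom_succ n
    have key : (n+1)^2 * ((2*(n+1)+1) * (Nat.centralBinom (n+1))^2)
        ≤ (n+1)^2 * 16^(n+1) := by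
      have h2 : ((n+1) * Nat.centralBinom (n+1))^2 = (2*(2*n+1) * Nat.centralBinom n)^2 := by
        rw [h]
      calc (n+1)^2 * ((2*(n+1)+1) * (Nat.centralBinom (n+1))^2)
          = (2*(n+1)+1) * ((n+1) * Nat.centralBinom (n+1))^2 := by ring
        _ = (2*(n+1)+1) * (2*(2*n+1) * Nat.centralBinom n)^2 := by rw [h2]
        _ = (2*n+3) * (2*n+1) * 4 * ((2*n+1) * (Nat.centralBinom n)^2) := by ring
        _ ≤ (2*n+3) * (2*n+1) * 4 * 16^n := Nat.mul_le_mul_left _ ih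
        _ ≤ ((n+1)^2 * 16) * 16^n := Nat.mul_le_mul_right _ (by nlinarith)
        _ = (n+1)^2 * 16^(n+1) := by ring
    exact le_of_mul_le_mul_left key (by positivity)

lemma mid_sq (d : ℕ) : (d+1) * (d.choose (d/2))^2 ≤ 4^d := by
  rcases Nat.even_or_odd d with ⟨n, hn⟩ | ⟨n, hn⟩
  · have hd : d = 2*n := by omega
    subst hd
    have h2 : (2*n)/2 = n := by omega
    rw [h2, ← Nat.centralBinom_eq_two_mul_choose]
    calc (2*n+1) * (Nat.centralBinom n)^2 ≤ 16^n := central_sq n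
      _ = 4^(2*n) := by rw [pow_mul]; norm_num
  · subst hn
    have hd2 : (2*n+1)/2 = n := by omega
    rw [hd2]
    have hsym : (2*n+1).choose n = (2*n+1).choose (n+1) := by
      have h0 := Nat.choose_symm (n := 2*n+1) (k := n+1) (by omega)
      have h3 : 2*n+1-(n+1) = n := by omega
      rw [h3] at h0
      exact h0
    have hsum : Nat.centralBinom (n+1) = 2 * (2*n+1).choose n := by
      rw [Nat.centralBinom_eq_two_mul_choose]
      have : 2*(n+1) = (2*n+1) + 1 := by omega
      rw [this, Nat.choose_succ_succ']
      omega
    have hc := central_sq (n+1)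
    rw [hsum] at hc
    have : (2*(n+1)+1) * (2 * (2*n+1).choose n)^2
        = (2*n+3) * 4 * ((2*n+1).choose n)^2 := by ring
    rw [this] at hc
    have h16 : (16:ℕ)^(n+1) = 4 * 4^(2*n+1) := by
      have : 16 = 4*4 := by norm_num
      rw [show (16:ℕ) = 4^2 by norm_num, ← pow_mul]
      rw [show 2*(n+1) = (2*n+1)+1 by omega, pow_succ]
      ring
    rw [h16] at hc
    have h4 : 4 * ((2*n+1+1) * ((2*n+1).choose n)^2) ≤ 4 * 4^(2*n+1) := by
      calc 4 * ((2*n+1+1) * ((2*n+1).choose n)^2) = (2*n+2) * 4 * ((2*n+1).choose n)^2 := by ring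
        _ ≤ (2*n+3) * 4 * ((2*n+1).choose n)^2 := by
            apply Nat.mul_le_mul_right; apply Nat.mul_le_mul_right; omega
        _ ≤ 4 * 4^(2*n+1) := hc
    exact Nat.le_of_mul_le_mul_left h4 (by norm_num)

lemma sum_half (d : ℕ) : 2^d ≤ 2 * ∑ i ∈ range (d/2 + 1), d.choose i := by
  rcases Nat.even_or_odd d with ⟨n, hn⟩ | ⟨n, hn⟩
  · have hd : d = 2*n := by omega
    subst hd
    have h2 : (2*n)/2 = n := by omega
    rw [h2]
    have key : ∑ i ∈ range (n+1), (2*n+1).choose i ≤ ∑ i ∈ range (n+1), 2 * (2*n).choose i := by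
      apply Finset.sum_le_sum
      intro i hi
      simp only [mem_range] at hi
      rcases Nat.eq_zero_or_pos i with h0 | h0
      · subst h0; simp
      · obtain ⟨j, rfl⟩ := Nat.exists_eq_succ_of_ne_zero h0.ne'
        have hcs : (2*n+1).choose (j+1) = (2*n).choose j + (2*n).choose (j+1) :=
          Nat.choose_succ_succ' (2*n) j
        have hmono : (2*n).choose j ≤ (2*n).choose (j+1) :=
          Nat.choose_le_succ_of_lt_half_left (by omega)
        calc (2*n+1).choose (j+1) = (2*n).choose j + (2*n).choose (j+1) := hcs
          _ ≤ 2 * (2*n).choose (j+1) := by omega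
    have hs := Nat.sum_range_choose_halfway n
    calc 2^(2*n) = 4^n := by rw [pow_mul]; norm_num
      _ = ∑ i ∈ range (n+1), (2*n+1).choose i := hs.symm
      _ ≤ ∑ i ∈ range (n+1), 2 * (2*n).choose i := key
      _ = 2 * ∑ i ∈ range (n+1), (2*n).choose i := by rw [Finset.mul_sum]
  · subst hn
    have h2 : (2*n+1)/2 = n := by omega
    rw [h2]
    have hs := Nat.sum_range_choose_halfway n
    calc 2^(2*n+1) = 2 * 4^n := by rw [pow_succ, pow_mul]; ring
      _ ≤ 2 * ∑ i ∈ range (n+1), (2*n+1).choose i := le_of_eq (by rw [hs])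

lemma count_lower (d m : ℕ) :
    ∑ i ∈ range (m+1), d.choose i
      ≤ (univ.filter (fun x : Fin d → ZMod 2 => hammingNorm x ≤ m)).card := by
  classical
  set F : Finset (Fin d) → (Fin d → ZMod 2) := fun s j => if j ∈ s then 1 else 0 with hF
  have hnorm : ∀ s : Finset (Fin d), hammingNorm (F s) = s.card := by
    intro s
    unfold hammingNorm
    congr 1
    ext j
    simp only [mem_filter, mem_univ, true_and, F]
    by_cases hs : j ∈ s <;> simp [hs]
  have hFinj : Function.Injective F := by
    intro s t h
    ext j
    have h1 := congrFun h j
    simp only [F] at h1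
    by_cases hs : j ∈ s <;> by_cases ht : j ∈ t <;> simp [hs, ht] at h1 ⊢
  have hsub : ((range (m+1)).biUnion (fun i => powersetCard i (univ : Finset (Fin d)))).image F
      ⊆ univ.filter (fun x : Fin d → ZMod 2 => hammingNorm x ≤ m) := by
    intro x hx
    simp only [mem_image, mem_biUnion, mem_range, mem_powersetCard] at hx
    obtain ⟨s, ⟨i, hi, _, hcard⟩, rfl⟩ := hx
    simp only [mem_filter, mem_univ, true_and, hnorm]
    omega
  have hdisj : ∀ i ∈ range (m+1), ∀ j ∈ range (m+1), i ≠ j →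
      Disjoint (powersetCard i (univ : Finset (Fin d))) (powersetCard j univ) := by
    intro i _ j _ hij
    rw [Finset.disjoint_left]
    intro s hs hs'
    rw [mem_powersetCard] at hs hs'
    omega
  calc ∑ i ∈ range (m+1), d.choose i
      = ∑ i ∈ range (m+1), (powersetCard i (univ : Finset (Fin d))).card := by
        apply Finset.sum_congr rfl
        intro i _
        rw [Finset.card_powersetCard, Finset.card_univ, Fintype.card_fin]
    _ = ((range (m+1)).biUnion (fun i => powersetCard i (univ : Finset (Fin d)))).card :=
        (Finset.card_biUnion hdisj).symm
    _ = (((range (m+1)).biUnion (fun i => powersetCard i (univ : Finset (Fin d)))).image F).card :=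
        (Finset.card_image_of_injective _ hFinj).symm
    _ ≤ _ := Finset.card_le_card hsub
end AuxHB

section AuxHB2
open Finset
/-- For every `k ∈ ℕ` and `δ < 1/2`, for all sufficiently large `d` the Hamming ball
`H_k(𝟙) ⊆ 𝔽₂^d` is `δ`-nonrecurrent. -/
theorem hammingBall_nonrecurrent (k : ℕ) (δ : ℝ) (hδ : δ < 1 / 2) :
    ∃ d₀ : ℕ, ∀ d ≥ d₀, GroupNonrecurrent δ (hammingBall d k (fun _ => 1)) := by
  obtain ⟨ε, hε, hεdef⟩ : ∃ ε : ℝ, 0 < ε ∧ δ = 1/2 - ε :=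
    ⟨1/2 - δ, by linarith, by ring⟩
  obtain ⟨N, hN⟩ := exists_nat_gt (((k:ℝ)+1)^2 / ε^2)
  refine ⟨N + 2*(k+1), fun d hd => ?_⟩
  have hdk : k + 1 ≤ d/2 := by omega
  set m : ℕ := d/2 - (k+1) with hm
  set M : ℕ := d.choose (d/2) with hM
  set Sm : ℕ := ∑ i ∈ range (m+1), d.choose i with hSm
  refine ⟨{x | hammingNorm x ≤ m}, ?_, ?_⟩
  · -- cardinality bound
    have hncard : ({x : Fin d → ZMod 2 | hammingNorm x ≤ m}).ncard
        = (univ.filter (fun x : Fin d → ZMod 2 => hammingNorm x ≤ m)).card := by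
      rw [← Set.ncard_coe_finset]
      congr 1
      ext x
      simp
    have hcardΓ : Fintype.card (Fin d → ZMod 2) = 2^d := by simp [Fintype.card_fun]
    -- ℕ inequality: 2^d ≤ 2*Sm + 2*(k+1)*M
    have h1 : ∑ i ∈ range (d/2+1), d.choose i ≤ Sm + (k+1) * M := by
      have hsplit : range (d/2+1) = range (m+1) ∪ Ico (m+1) (d/2+1) := by
        rw [Finset.range_eq_Ico, Finset.range_eq_Ico, Finset.Ico_union_Ico_eq_Ico (by omega : 0 ≤ m+1) (by omega : m+1 ≤ d/2+1)]
      rw [hsplit, Finset.sum_union (by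
        rw [Finset.range_eq_Ico]
        exact Finset.Ico_disjoint_Ico_consecutive 0 (m+1) (d/2+1))]
      have h2 : ∑ i ∈ Ico (m+1) (d/2+1), d.choose i ≤ (k+1) * M := by
        calc ∑ i ∈ Ico (m+1) (d/2+1), d.choose i
            ≤ ∑ _i ∈ Ico (m+1) (d/2+1), M :=
              Finset.sum_le_sum (fun i _ => Nat.choose_le_middle i d)
          _ = (d/2+1 - (m+1)) * M := by rw [Finset.sum_const, Nat.card_Ico, smul_eq_mul]
          _ = (k+1) * M := by congr 1; omega
      omega
    have h2 : (2:ℕ)^d ≤ 2 * Sm + 2 * ((k+1) * M) := by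
      have := sum_half d
      omega
    have h3 : Sm ≤ (univ.filter (fun x : Fin d → ZMod 2 => hammingNorm x ≤ m)).card :=
      count_lower d m
    -- real bound (k+1)*M < ε*2^d
    have hmid := mid_sq d
    have hMR : ((k:ℝ)+1) * M < ε * 2^d := by
      have hb : ((d:ℝ)+1) * (M:ℝ)^2 ≤ 4^d := by exact_mod_cast hmid
      have hc : ((k:ℝ)+1)^2 < ε^2 * ((d:ℝ)+1) := by
        have hd1 : (N:ℝ) ≤ (d:ℝ) := by exact_mod_cast le_trans (by omega) hd
        have := (div_lt_iff₀ (by positivity)).mp hN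
        nlinarith
      have hsq : (((k:ℝ)+1) * M)^2 < (ε * 2^d)^2 := by
        have h4 : ((4:ℝ))^d = (2^d)^2 := by
          rw [← pow_mul, show d*2 = 2*d from by ring, pow_mul]; norm_num
        have hMpos : (0:ℝ) < (M:ℝ)^2 := by
          have : 0 < M := Nat.choose_pos (Nat.div_le_self d 2)
          positivity
        calc (((k:ℝ)+1) * M)^2 = ((k:ℝ)+1)^2 * (M:ℝ)^2 := by ring
          _ < (ε^2 * ((d:ℝ)+1)) * (M:ℝ)^2 := mul_lt_mul_of_pos_right hc hMpos
          _ = ε^2 * (((d:ℝ)+1) * (M:ℝ)^2) := by ring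
          _ ≤ ε^2 * 4^d := mul_le_mul_of_nonneg_left hb (by positivity)
          _ = (ε * 2^d)^2 := by rw [h4]; ring
      have := lt_of_pow_lt_pow_left₀ 2 (by positivity) hsq
      exact this
    -- combine
    rw [hncard, hcardΓ]
    have hSmR : ((2:ℝ))^d ≤ 2 * (Sm:ℝ) + 2 * (((k:ℝ)+1) * M) := by exact_mod_cast h2
    have hfc : (Sm:ℝ) ≤ ((univ.filter (fun x : Fin d → ZMod 2 => hammingNorm x ≤ m)).card : ℝ) := by
      exact_mod_cast h3
    push_cast
    have heq : δ * 2^d = 2^d/2 - ε * 2^d := by rw [hεdef]; ring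
    rw [heq]
    have s1 : (Sm:ℝ) ≥ 2^d/2 - ((k:ℝ)+1) * M := by linarith
    linarith
  · -- difference condition
    intro a ha b hb hmem
    simp only [Set.mem_setOf_eq] at ha hb
    simp only [hammingBall, Set.mem_setOf_eq] at hmem
    have hnormd : hammingNorm (fun _ : Fin d => (1 : ZMod 2)) = d := by simp [hammingNorm]
    have htri : d ≤ hammingDist (fun _ : Fin d => (1 : ZMod 2)) (a - b)
        + hammingNorm (a - b) := by
      calc d = hammingDist (fun _ : Fin d => (1 : ZMod 2)) 0 := by
            rw [hammingDist_zero_right, hnormd]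
        _ ≤ hammingDist (fun _ : Fin d => (1 : ZMod 2)) (a - b) + hammingDist (a - b) 0 :=
            hammingDist_triangle _ _ _
        _ = _ := by rw [hammingDist_zero_right]
    have hnab : hammingNorm (a - b) ≤ 2 * m := by
      calc hammingNorm (a - b) = hammingDist a b := by rw [hammingDist_comm, hammingDist_eq_hammingNorm, neg_add_eq_sub]
        _ ≤ hammingDist a 0 + hammingDist 0 b := hammingDist_triangle _ _ _
        _ = hammingNorm a + hammingNorm b := by
            rw [hammingDist_zero_right, hammingDist_comm, hammingDist_zero_right]
        _ ≤ 2 * m := by omega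
    omega

end AuxHB2
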